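/- For integers m, n ≥ 1 there is an identity of formal power series: Σ_{i≥0} binom(m−1+i, m−1) binom(n−1+i, n−1) z^i = h_{m,n}(z)/(1−z)^{m+n−1}, where h_{m,n}(z) = Σ_{i=0}^{m−1} binom(m−1, i) binom(n−1, i) z^i. -/

import Mathlib

open PowerSeries Polynomial

/-- Series with coefficients `C(a+i,a)·C(b+i,b)`. -/
noncomputable def HsAux (a b : ℕ) : PowerSeries ℤ :=
  PowerSeries.mk fun i => ((a + i).choose a : ℤ) * ((b + i).choose b : ℤ)

/-- Series with coefficients `C(j+c,c)`, i.e. `1/(1-X)^(c+1)`. -/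
noncomputable def GsAux (c : ℕ) : PowerSeries ℤ :=
  PowerSeries.mk fun j => ((j + c).choose c : ℤ)

/-- Series with coefficients `C(a,k)·C(b,k)` (a polynomial, really). -/
noncomputable def hsAux (a b : ℕ) : PowerSeries ℤ :=
  PowerSeries.mk fun k => (a.choose k : ℤ) * (b.choose k : ℤ)

lemma GsAux_rec (c : ℕ) : (1 - PowerSeries.X) * GsAux (c + 1) = GsAux c := by
  ext i
  rw [sub_mul, one_mul, map_sub]
  cases i with
  | zero => simp [GsAux]
  | succ i =>
      rw [PowerSeries.coeff_succ_X_mul]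
      simp only [GsAux, PowerSeries.coeff_mk]
      have h1 : i + 1 + (c + 1) = (i + (c + 1)) + 1 := by omega
      rw [h1, Nat.choose_succ_succ' (i + (c + 1)) c]
      have h2 : i + (c + 1) = i + 1 + c := by omega
      push_cast [h2]
      ring

lemma HsAux_rec (a b : ℕ) :
    (1 - PowerSeries.X) * HsAux (a + 1) (b + 1) =
      HsAux (a + 1) b + HsAux a (b + 1) - HsAux a b := by
  ext i
  rw [sub_mul, one_mul, map_sub, map_sub, map_add]
  cases i with
  | zero => simp [HsAux]
  | succ i =>
      rw [PowerSeries.coeff_succ_X_mul]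
      simp only [HsAux, PowerSeries.coeff_mk]
      have e1 : a + 1 + (i + 1) = (a + i + 1) + 1 := by omega
      have e2 : b + 1 + (i + 1) = (b + i + 1) + 1 := by omega
      have e3 : a + 1 + i = (a + i) + 1 := by omega
      have e4 : b + 1 + i = (b + i) + 1 := by omega
      have e5 : b + (i + 1) = (b + i) + 1 := by omega
      have e6 : a + (i + 1) = (a + i) + 1 := by omega
      rw [e1, e2, e3, e4, e5, e6,
        Nat.choose_succ_succ' (a + i + 1) a, Nat.choose_succ_succ' (b + i + 1) b]
      have f1 : a + i + 1 = (a + i) + 1 := rfl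
      rw [f1]
      push_cast
      ring

lemma hsAux_rec (a b : ℕ) :
    hsAux (a + 1) (b + 1) =
      hsAux (a + 1) b + hsAux a (b + 1) - (1 - PowerSeries.X) * hsAux a b := by
  ext k
  rw [map_sub, map_add, sub_mul, one_mul, map_sub]
  cases k with
  | zero => simp [hsAux]
  | succ k =>
      rw [PowerSeries.coeff_succ_X_mul]
      simp only [hsAux, PowerSeries.coeff_mk]
      rw [Nat.choose_succ_succ' a k, Nat.choose_succ_succ' b k]
      push_cast
      ring

lemma HsAux_zero_left (b : ℕ) : HsAux 0 b = GsAux b := by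
  ext i
  simp only [HsAux, GsAux, PowerSeries.coeff_mk, Nat.zero_add, Nat.choose_zero_right,
    Nat.cast_one, one_mul, Nat.add_comm b i]

lemma HsAux_zero_right (a : ℕ) : HsAux a 0 = GsAux a := by
  ext i
  simp only [HsAux, GsAux, PowerSeries.coeff_mk, Nat.add_zero, Nat.choose_zero_right,
    Nat.cast_one, mul_one, Nat.add_comm a i]

lemma hsAux_zero_left (b : ℕ) : hsAux 0 b = 1 := by
  ext k
  cases k with
  | zero => simp [hsAux]
  | succ k =>
      simp [hsAux, Nat.choose_eq_zero_of_lt (Nat.succ_pos k), PowerSeries.coeff_one]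

lemma hsAux_zero_right (a : ℕ) : hsAux a 0 = 1 := by
  ext k
  cases k with
  | zero => simp [hsAux]
  | succ k =>
      simp [hsAux, Nat.choose_eq_zero_of_lt (Nat.succ_pos k), PowerSeries.coeff_one]

lemma one_sub_X_ne_zero : (1 - PowerSeries.X : PowerSeries ℤ) ≠ 0 := by
  intro h
  have := congrArg PowerSeries.constantCoeff h
  simp at this

lemma HsAux_eq (a : ℕ) : ∀ b : ℕ, HsAux a b = hsAux a b * GsAux (a + b) := by
  induction a with
  | zero =>
      intro b
      rw [HsAux_zero_left, hsAux_zero_left, one_mul, Nat.zero_add]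
  | succ a iha =>
      intro b
      induction b with
      | zero =>
          rw [HsAux_zero_right, hsAux_zero_right, one_mul, Nat.add_zero]
      | succ b ihb =>
          apply mul_left_cancel₀ one_sub_X_ne_zero
          rw [HsAux_rec, ihb, iha (b + 1), iha b, hsAux_rec]
          have e1 : a + (b + 1) = a + 1 + b := by omega
          rw [e1]
          have g2 : GsAux (a + 1 + b) = (1 - PowerSeries.X) * GsAux (a + 1 + b + 1) :=
            (GsAux_rec (a + 1 + b)).symm
          have g3 : GsAux (a + b) = (1 - PowerSeries.X) *
              ((1 - PowerSeries.X) * GsAux (a + 1 + b + 1)) := by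
            rw [← g2, ← GsAux_rec (a + b), show a + b + 1 = a + 1 + b from by omega]
          have e2 : a + 1 + (b + 1) = a + 1 + b + 1 := by omega
          rw [e2, g2, g3]
          ring

/-- The Hilbert series of the Segre product of polynomial rings in `m` and `n`
variables: `∑_{i≥0} binom(m-1+i,m-1)·binom(n-1+i,n-1) zⁱ = h_{m,n}(z)/(1-z)^{m+n-1}`,
where `h_{m,n}(z) = ∑_{i=0}^{m-1} binom(m-1,i)·binom(n-1,i) zⁱ` and
`1/(1-z)^{m+n-1} = ∑_{j≥0} binom(j+m+n-2, m+n-2) zʲ`. -/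
theorem stmt8 (m n : ℕ) (hm : 1 ≤ m) (hn : 1 ≤ n) :
    PowerSeries.mk (fun i => (((m - 1 + i).choose (m - 1) * (n - 1 + i).choose (n - 1) : ℕ) : ℤ)) =
      (↑(∑ i ∈ Finset.range m,
          Polynomial.C ((((m - 1).choose i * (n - 1).choose i : ℕ)) : ℤ) * (Polynomial.X : Polynomial ℤ) ^ i) :
        PowerSeries ℤ) *
      PowerSeries.mk (fun j => ((j + m + n - 2).choose (m + n - 2) : ℤ)) := by
  obtain ⟨a, rfl⟩ : ∃ a, m = a + 1 := ⟨m - 1, by omega⟩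
  obtain ⟨b, rfl⟩ : ∃ b, n = b + 1 := ⟨n - 1, by omega⟩
  have hpoly : (↑(∑ i ∈ Finset.range (a + 1),
        Polynomial.C ((((a + 1 - 1).choose i * (b + 1 - 1).choose i : ℕ)) : ℤ) *
          (Polynomial.X : Polynomial ℤ) ^ i) : PowerSeries ℤ) = hsAux a b := by
    ext k
    rw [Polynomial.coeff_coe]
    simp only [Nat.add_sub_cancel, Polynomial.finset_sum_coeff, Polynomial.coeff_C_mul,
      Polynomial.coeff_X_pow, mul_ite, mul_one, mul_zero, Finset.sum_ite_eq, Finset.mem_range]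
    simp only [hsAux, PowerSeries.coeff_mk]
    split_ifs with h
    · push_cast; ring
    · have : a.choose k = 0 := Nat.choose_eq_zero_of_lt (by omega)
      simp [this]
  have hlhs : PowerSeries.mk (fun i =>
      (((a + 1 - 1 + i).choose (a + 1 - 1) * (b + 1 - 1 + i).choose (b + 1 - 1) : ℕ) : ℤ)) =
      HsAux a b := by
    ext i
    simp only [Nat.add_sub_cancel, HsAux, PowerSeries.coeff_mk]
    push_cast
    ring
  have hrhs : PowerSeries.mk (fun j =>
      ((j + (a + 1) + (b + 1) - 2).choose (a + 1 + (b + 1) - 2) : ℤ)) = GsAux (a + b) := by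
    ext j
    simp only [GsAux, PowerSeries.coeff_mk]
    congr 2 <;> omega
  rw [hpoly, hlhs, hrhs, HsAux_eq]
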